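/- Let n > 2 and m > 2 be integers, and let N ∈ 𝕋ₙ(𝔽₂) be a nilpotent upper triangular matrix such that (I + N)ᵐ = I. Then N^{k₁(m)} = 0. -/

import Mathlib

/-- The ring of n×n upper triangular matrices over 𝔽₂, as a subring of the full matrix ring. -/
def Triangular (n : ℕ) : Subring (Matrix (Fin n) (Fin n) (ZMod 2)) where
  carrier := {A | A.BlockTriangular id}
  zero_mem' := Matrix.blockTriangular_zero
  one_mem' := Matrix.blockTriangular_one
  add_mem' := fun ha hb => ha.add hb
  neg_mem' := fun ha => ha.neg
  mul_mem' := fun ha hb => ha.mul hb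

/-- `k1 m` is the smallest `k` with `1 ≤ k ≤ m` such that `C(m, k)` is odd. -/
noncomputable def k1 (m : ℕ) : ℕ := sInf {k | 1 ≤ k ∧ k ≤ m ∧ Odd (m.choose k)}

theorem nilpotent_pow_k1_eq_zero (n m : ℕ) (hn : 2 < n) (hm : 2 < m)
    (N : Triangular n) (hN : IsNilpotent N) (h : (1 + N) ^ m = 1) :
    N ^ k1 m = 0 := by
  haveI : Fact (Nat.Prime 2) := ⟨Nat.prime_two⟩
  haveI : Nonempty (Fin n) := ⟨⟨0, by omega⟩⟩
  have hm0 : m ≠ 0 := by omega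
  set v : ℕ := m.factorization 2 with hv
  set q : ℕ := m / 2 ^ v with hq
  have hmain : m = 2 ^ v * q := (Nat.ordProj_mul_ordCompl_eq_self m 2).symm
  have hqodd : ¬ 2 ∣ q := Nat.not_dvd_ordCompl Nat.prime_two hm0
  -- Step 1: N ^ (2 ^ v) = 0
  have hcomm : Commute (1 : Triangular n) N := Commute.one_left N
  have hfrob : (1 + N) ^ 2 ^ v = 1 + N ^ 2 ^ v := by
    rw [add_pow_char_pow_of_commute 2 v hcomm, one_pow]
  set M : Triangular n := N ^ 2 ^ v with hM
  have hMq : (1 + M) ^ q = 1 := by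
    rw [hM, ← hfrob, ← pow_mul, ← hmain, h]
  obtain ⟨j, hj⟩ := hN
  have hMpow : (1 + M) ^ 2 ^ j = 1 := by
    have : M ^ 2 ^ j = 0 := by
      rw [hM, ← pow_mul]
      have hle : j ≤ 2 ^ v * 2 ^ j := le_trans (Nat.lt_two_pow_self (n := j)).le
        (Nat.le_mul_of_pos_left _ (Nat.pow_pos (n := v) (by norm_num)))
      obtain ⟨c, hc⟩ := Nat.exists_eq_add_of_le hle
      rw [hc, pow_add, hj, zero_mul]
    rw [add_pow_char_pow_of_commute 2 j (Commute.one_left M), this, one_pow, add_zero]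
  have hord : orderOf (1 + M) = 1 := by
    have h1 := orderOf_dvd_of_pow_eq_one hMq
    have h2 := orderOf_dvd_of_pow_eq_one hMpow
    have := Nat.dvd_gcd h1 h2
    have hcop : Nat.Coprime q (2 ^ j) :=
      (Nat.coprime_two_left.mpr (Nat.odd_iff.mpr (Nat.not_even_iff.mp
        (fun he => hqodd he.two_dvd)))).symm.pow_right j
    rwa [Nat.Coprime.gcd_eq_one hcop, Nat.dvd_one] at this
  have hM0 : M = 0 := by
    have := orderOf_eq_one_iff.mp hord
    exact add_eq_left.mp this
  -- Step 2: 2 ^ v ≤ k1 m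
  have hmem : k1 m ∈ {k | 1 ≤ k ∧ k ≤ m ∧ Odd (m.choose k)} := by
    apply Nat.sInf_mem
    exact ⟨m, by omega, le_refl m, by simp [Nat.choose_self]⟩
  obtain ⟨hk1, hk2, hk3⟩ := hmem
  have hdvd : 2 ^ v ∣ k1 m := by
    have hident : m * (m - 1).choose (k1 m - 1) = m.choose (k1 m) * k1 m := by
      have := Nat.add_one_mul_choose_eq (m - 1) (k1 m - 1)
      rwa [show m - 1 + 1 = m by omega, show k1 m - 1 + 1 = k1 m by omega] at this
    have hdm : 2 ^ v ∣ m.choose (k1 m) * k1 m := hident ▸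
      Dvd.dvd.mul_right (Nat.ordProj_dvd m 2) _
    have hcop : Nat.Coprime (2 ^ v) (m.choose (k1 m)) :=
      (Nat.coprime_two_left.mpr hk3).pow_left v |>.symm.symm
    exact (Nat.Coprime.dvd_of_dvd_mul_left hcop hdm)
  have hle : 2 ^ v ≤ k1 m := Nat.le_of_dvd (by omega) hdvd
  obtain ⟨c, hc⟩ := Nat.exists_eq_add_of_le hle
  rw [hc, pow_add, ← hM, hM0, zero_mul]
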